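/- For every point (x,y,z) on the unit sphere in ℝ³ (i.e. x²+y²+z²=1), the 4×4 matrix M with rows (0, x, -y, z), (x, 0, z, y), (y, z, 0, -x), (z, -y, -x, 0) is a special orthogonal matrix: MᵀM = I and det M = 1. -/

import Mathlib

open Matrix

theorem stmt0 (x y z : ℝ) (h : x^2 + y^2 + z^2 = 1) :
    let M : Matrix (Fin 4) (Fin 4) ℝ :=
      !![0, x, -y, z; x, 0, z, y; y, z, 0, -x; z, -y, -x, 0]
    Mᵀ * M = 1 ∧ M.det = 1 := by
  intro M
  constructor
  · show !![0, x, -y, z; x, 0, z, y; y, z, 0, -x; z, -y, -x, 0]ᵀ *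
      !![0, x, -y, z; x, 0, z, y; y, z, 0, -x; z, -y, -x, 0] = 1
    ext i j
    fin_cases i <;> fin_cases j <;>
      simp [Matrix.mul_apply, Fin.sum_univ_succ, Matrix.one_apply] <;> nlinarith [h]
  · show Matrix.det !![0, x, -y, z; x, 0, z, y; y, z, 0, -x; z, -y, -x, 0] = 1
    simp [Matrix.det_succ_row_zero, Fin.sum_univ_succ, Fin.succAbove, Fin.castSucc, Fin.castAdd, Fin.castLE]
    nlinarith [h, sq_nonneg x, sq_nonneg y, sq_nonneg z]
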